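/- Let H be a Hilbert space, G₁,...,G_N ∈ L(H) an N-tuple such that ∑_k ζ_k G_k is unitary for all ζ in the N-torus, and let C₁,...,C_N ∈ L(E) be contractions on a Hilbert space E admitting a joint unitary dilation. Then ∑_{k=1}^N G_k ⊗ C_k is a contraction, i.e., ‖∑_k G_k ⊗ C_k‖ ≤ 1. -/

import Mathlib

open ContinuousLinearMap
open scoped InnerProductSpace

set_option maxHeartbeats 1000000
set_option synthInstance.maxHeartbeats 1000000


private lemma torus_aux' {N : ℕ} (M : Fin N → Fin N → ℂ) (c : ℂ)
    (h : ∀ ζ : Fin N → ℂ, (∀ k, ‖ζ k‖ = 1) →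
      ∑ k, ∑ l, (starRingEnd ℂ) (ζ k) * (ζ l * M k l) = c) :
    (∀ k l, k ≠ l → M k l = 0) ∧ ∑ k, M k k = c := by
  have hR : ∀ (ζ : Fin N → ℂ), (∀ m, ‖ζ m‖ = 1) → ∀ k,
      ∑ l ∈ Finset.univ.erase k, ζ l * M k l = 0 := by
    intro ζ hζ k
    have key : ∀ t : ℂ, ‖t‖ = 1 →
        M k k + (starRingEnd ℂ) t * (∑ l ∈ Finset.univ.erase k, ζ l * M k l)
          + t * (∑ a ∈ Finset.univ.erase k, (starRingEnd ℂ) (ζ a) * M a k)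
          + ∑ a ∈ Finset.univ.erase k, ∑ l ∈ Finset.univ.erase k,
              (starRingEnd ℂ) (ζ a) * (ζ l * M a l) = c := by
      intro t ht
      set ζt := Function.update ζ k t with hζtdef
      have hζt : ∀ m, ‖ζt m‖ = 1 := by
        intro m
        rcases eq_or_ne m k with rfl | hm
        · simpa [hζtdef] using ht
        · simpa [hζtdef, Function.update_of_ne hm] using hζ m
      have h0 := h ζt hζt
      have e1 : ∀ a : Fin N, ∑ l, (starRingEnd ℂ) (ζt a) * (ζt l * M a l)
          = (starRingEnd ℂ) (ζt a) * (t * M a k)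
            + (starRingEnd ℂ) (ζt a) * ∑ l ∈ Finset.univ.erase k, ζ l * M a l := by
        intro a
        rw [← Finset.add_sum_erase _ _ (Finset.mem_univ k), Finset.mul_sum]
        congr 1
        · simp [hζtdef]
        · exact Finset.sum_congr rfl fun l hl => by
            rw [hζtdef, Function.update_of_ne (Finset.ne_of_mem_erase hl)]
      rw [← Finset.add_sum_erase _ _ (Finset.mem_univ k)] at h0
      rw [e1 k] at h0
      have e2 : ∑ a ∈ Finset.univ.erase k, ∑ l, (starRingEnd ℂ) (ζt a) * (ζt l * M a l)
          = t * (∑ a ∈ Finset.univ.erase k, (starRingEnd ℂ) (ζ a) * M a k)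
            + ∑ a ∈ Finset.univ.erase k, ∑ l ∈ Finset.univ.erase k,
                (starRingEnd ℂ) (ζ a) * (ζ l * M a l) := by
        rw [Finset.mul_sum, ← Finset.sum_add_distrib]
        refine Finset.sum_congr rfl fun a ha => ?_
        rw [e1 a, hζtdef, Function.update_of_ne (Finset.ne_of_mem_erase ha), Finset.mul_sum]
        ring
      rw [e2] at h0
      have htt : (starRingEnd ℂ) t * t = 1 := by
        rw [RCLike.conj_mul, ht]; norm_num
      have hζtk : ζt k = t := by simp [hζtdef]
      rw [hζtk] at h0
      calc M k k + (starRingEnd ℂ) t * (∑ l ∈ Finset.univ.erase k, ζ l * M k l)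
            + t * (∑ a ∈ Finset.univ.erase k, (starRingEnd ℂ) (ζ a) * M a k)
            + ∑ a ∈ Finset.univ.erase k, ∑ l ∈ Finset.univ.erase k,
                (starRingEnd ℂ) (ζ a) * (ζ l * M a l)
          = (starRingEnd ℂ) t * (t * M k k)
            + (starRingEnd ℂ) t * (∑ l ∈ Finset.univ.erase k, ζ l * M k l)
            + (t * (∑ a ∈ Finset.univ.erase k, (starRingEnd ℂ) (ζ a) * M a k)
              + ∑ a ∈ Finset.univ.erase k, ∑ l ∈ Finset.univ.erase k,
                  (starRingEnd ℂ) (ζ a) * (ζ l * M a l)) := by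
            rw [← mul_assoc, htt]; ring
        _ = c := h0
    set R := ∑ l ∈ Finset.univ.erase k, ζ l * M k l with hRdef
    set S := ∑ a ∈ Finset.univ.erase k, (starRingEnd ℂ) (ζ a) * M a k with hSdef
    have k1 := key 1 (by simp)
    have k2 := key (-1) (by norm_num)
    have k3 := key Complex.I (by simp)
    simp only [map_one, map_neg, Complex.conj_I, one_mul, neg_mul, neg_neg] at k1 k2 k3
    linear_combination (1/4 - Complex.I/4) * k1 + (-1/4 - Complex.I/4) * k2
      + (Complex.I/2) * k3 + (R/2 - S/2) * Complex.I_sq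
  constructor
  · intro k l hkl
    have h1 := hR (fun _ => 1) (fun _ => by simp) k
    have h2 := hR (Function.update (fun _ => (1:ℂ)) l (-1)) (fun m => by
        rcases eq_or_ne m l with rfl | hm
        · simp
        · simp [Function.update_of_ne hm]) k
    have hlk : l ∈ Finset.univ.erase k := Finset.mem_erase.mpr ⟨fun h => hkl h.symm, Finset.mem_univ l⟩
    rw [← Finset.add_sum_erase _ _ hlk] at h1 h2
    rw [Function.update_self] at h2
    have e3 : ∑ b ∈ (Finset.univ.erase k).erase l,
        Function.update (fun _ => (1:ℂ)) l (-1) b * M k b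
        = ∑ b ∈ (Finset.univ.erase k).erase l, M k b := by
      refine Finset.sum_congr rfl fun b hb => ?_
      rw [Function.update_of_ne (Finset.ne_of_mem_erase hb), one_mul]
    rw [e3] at h2
    simp only [one_mul] at h1
    linear_combination (h1 - h2) / 2
  · have h1 := h (fun _ => 1) (fun _ => by simp)
    simp only [map_one, one_mul] at h1
    rw [← h1]
    refine Finset.sum_congr rfl fun k _ => ?_
    have h2 := hR (fun _ => 1) (fun _ => by simp) k
    simp only [one_mul] at h2
    rw [← Finset.add_sum_erase _ _ (Finset.mem_univ k), h2, add_zero]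

private lemma sqrt_compl {E : Type*} [NormedAddCommGroup E] [InnerProductSpace ℂ E]
    [CompleteSpace E] (C : E →L[ℂ] E) (hC : ‖C‖ ≤ 1) :
    ∃ D : E →L[ℂ] E, ∀ y y' : E, ⟪C y, C y'⟫_ℂ + ⟪D y, D y'⟫_ℂ = ⟪y, y'⟫_ℂ := by
  have hpos : 0 ≤ (1 - adjoint C ∘L C : E →L[ℂ] E) := by
    rw [nonneg_iff_isPositive]
    constructor
    · have h1 : IsSelfAdjoint (adjoint C ∘L C) := by
        rw [ContinuousLinearMap.isSelfAdjoint_iff']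
        rw [adjoint_comp, adjoint_adjoint]
      exact ((IsSelfAdjoint.one (E →L[ℂ] E)).sub h1).isSymmetric
    · intro x
      rw [reApplyInnerSelf_apply]
      have : ((1 - adjoint C ∘L C : E →L[ℂ] E)) x = x - adjoint C (C x) := rfl
      rw [this, inner_sub_left, map_sub]
      have h2 : ⟪(adjoint C) (C x), x⟫_ℂ = ⟪C x, C x⟫_ℂ := adjoint_inner_left C x (C x)
      rw [h2, inner_self_eq_norm_sq, inner_self_eq_norm_sq]
      have h3 : ‖C x‖ ≤ ‖x‖ := by
        calc ‖C x‖ ≤ ‖C‖ * ‖x‖ := le_opNorm C x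
        _ ≤ 1 * ‖x‖ := by gcongr
        _ = ‖x‖ := one_mul _
      nlinarith [norm_nonneg (C x), norm_nonneg x]
  set D := CFC.sqrt (1 - adjoint C ∘L C : E →L[ℂ] E) with hDdef
  have hDpos : (0:E →L[ℂ] E) ≤ D := CFC.sqrt_nonneg _
  have hDsa : IsSelfAdjoint D := IsSelfAdjoint.of_nonneg hDpos
  have hD2 : D ∘L D = 1 - adjoint C ∘L C := CFC.sqrt_mul_sqrt_self _ hpos
  refine ⟨D, fun y y' => ?_⟩
  have hc : ⟪C y, C y'⟫_ℂ = ⟪y, (adjoint C ∘L C) y'⟫_ℂ := by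
    rw [comp_apply, ← adjoint_inner_right]
  have hd : ⟪D y, D y'⟫_ℂ = ⟪y, (D ∘L D) y'⟫_ℂ := by
    rw [comp_apply, ← adjoint_inner_right]
    rw [ContinuousLinearMap.isSelfAdjoint_iff'.mp hDsa]
  rw [hc, hd, hD2, ← inner_add_right]
  congr 1
  simp

/-- If `∑ ζ_k • G_k` is unitary for all `ζ` in the `N`-torus and
`C_1, …, C_N` are contractions on `E` admitting a joint unitary dilation
(unitaries `Ud_k` on `K' ⊇ E`, with the inclusion realized by an isometry `J`),
then any operator `T` acting as `∑ G_k ⊗ C_k` on the Hilbert tensor product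
`H ⊗ E` is a contraction. -/
theorem stmt6 {H E K' HK : Type*}
    [NormedAddCommGroup H] [InnerProductSpace ℂ H] [CompleteSpace H]
    [NormedAddCommGroup E] [InnerProductSpace ℂ E] [CompleteSpace E]
    [NormedAddCommGroup K'] [InnerProductSpace ℂ K'] [CompleteSpace K']
    [NormedAddCommGroup HK] [InnerProductSpace ℂ HK] [CompleteSpace HK]
    {N : ℕ} (G : Fin N → H →L[ℂ] H)
    (hG : ∀ ζ : Fin N → ℂ, (∀ k, ‖ζ k‖ = 1) →
      (∑ k, ζ k • G k) ∈ unitary (H →L[ℂ] H))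
    (C : Fin N → E →L[ℂ] E) (hC : ∀ k, ‖C k‖ ≤ 1)
    -- joint unitary dilation of the tuple `C`
    (J : E →L[ℂ] K') (hJ : ∀ x, ‖J x‖ = ‖x‖)
    (Ud : Fin N → K' →L[ℂ] K') (hUd : ∀ k, Ud k ∈ unitary (K' →L[ℂ] K'))
    (hdil : ∀ w : FreeMonoid (Fin N),
      FreeMonoid.lift C w = adjoint J ∘L FreeMonoid.lift Ud w ∘L J)
    -- `T` acts as `∑ G_k ⊗ C_k` on the Hilbert tensor product `H ⊗ E`
    (ι : H →ₗ[ℂ] E →ₗ[ℂ] HK)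
    (hinner : ∀ (x x' : H) (y y' : E),
      ⟪ι x y, ι x' y'⟫_ℂ = ⟪x, x'⟫_ℂ * ⟪y, y'⟫_ℂ)
    (hdense : (Submodule.span ℂ {z : HK | ∃ x y, ι x y = z}).topologicalClosure = ⊤)
    (T : HK →L[ℂ] HK)
    (hT : ∀ (x : H) (y : E), T (ι x y) = ∑ k, ι (G k x) (C k y)) :
    ‖T‖ ≤ 1 := by
  classical
  -- Step 1: inner-product relations for the G's
  have hGinner : ∀ x x' : H,
      (∀ k l, k ≠ l → ⟪G k x, G l x'⟫_ℂ = 0) ∧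
        ∑ k, ⟪G k x, G k x'⟫_ℂ = ⟪x, x'⟫_ℂ := by
    intro x x'
    apply torus_aux'
    intro ζ hζ
    have hU := hG ζ hζ
    set Uop := ∑ k, ζ k • G k with hUop
    have h1 : star Uop * Uop = 1 := (Unitary.mem_iff.mp hU).1
    have h2 : ⟪Uop x, Uop x'⟫_ℂ = ⟪x, x'⟫_ℂ := by
      have e : adjoint Uop (Uop x') = x' := by
        rw [← star_eq_adjoint, ← ContinuousLinearMap.comp_apply, ← ContinuousLinearMap.mul_def,
          h1, ContinuousLinearMap.one_apply]
      calc ⟪Uop x, Uop x'⟫_ℂ = ⟪x, adjoint Uop (Uop x')⟫_ℂ := (adjoint_inner_right _ _ _).symm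
        _ = ⟪x, x'⟫_ℂ := by rw [e]
    calc ∑ k, ∑ l, (starRingEnd ℂ) (ζ k) * (ζ l * ⟪G k x, G l x'⟫_ℂ)
        = ⟪Uop x, Uop x'⟫_ℂ := by
          simp only [hUop, ContinuousLinearMap.sum_apply, ContinuousLinearMap.smul_apply,
            sum_inner, inner_sum, inner_smul_left, inner_smul_right]
          rw [Finset.sum_comm]
          refine Finset.sum_congr rfl fun l _ => ?_
          rw [Finset.mul_sum]
          exact Finset.sum_congr rfl fun k _ => by ring
      _ = ⟪x, x'⟫_ℂ := h2
  -- Step 2: defect operators for the C's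
  have hCD : ∀ k, ∃ D : E →L[ℂ] E,
      ∀ y y' : E, ⟪C k y, C k y'⟫_ℂ + ⟪D y, D y'⟫_ℂ = ⟪y, y'⟫_ℂ :=
    fun k => sqrt_compl (C k) (hC k)
  choose D hD using hCD
  -- pair computation
  have pair : ∀ (n : ℕ) (f : Fin n → ℂ) (a a' : Fin n → H) (b b' : Fin n → E),
      ⟪∑ i, f i • ι (a i) (b i), ∑ i, f i • ι (a' i) (b' i)⟫_ℂ
        = ∑ i, ∑ j, (starRingEnd ℂ) (f i) * (f j * (⟪a i, a' j⟫_ℂ * ⟪b i, b' j⟫_ℂ)) := by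
    intro n f a a' b b'
    simp only [sum_inner, inner_sum, inner_smul_left, inner_smul_right, hinner]
    rw [Finset.sum_comm]
    refine Finset.sum_congr rfl fun j _ => ?_
    rw [Finset.mul_sum]
    exact Finset.sum_congr rfl fun i _ => by ring
  -- Step 3: contraction on the span
  have hspan : ∀ w ∈ Submodule.span ℂ {z : HK | ∃ x y, ι x y = z}, ‖T w‖ ≤ ‖w‖ := by
    intro w hw
    obtain ⟨n, f, g, hz⟩ := Submodule.mem_span_set'.mp hw
    choose xv yv hgi using fun i => (g i).2
    have hw' : w = ∑ i, f i • ι (xv i) (yv i) := by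
      rw [← hz]
      exact Finset.sum_congr rfl fun i _ => by rw [hgi i]
    set v : Fin N → HK := fun k => ∑ i, f i • ι (G k (xv i)) (C k (yv i)) with hv
    set u : Fin N → HK := fun k => ∑ i, f i • ι (G k (xv i)) (D k (yv i)) with hu
    have hTw : T w = ∑ k, v k := by
      rw [hw', map_sum]
      have : ∀ i, T (f i • ι (xv i) (yv i)) = ∑ k, f i • ι (G k (xv i)) (C k (yv i)) := by
        intro i
        rw [map_smul, hT, Finset.smul_sum]
      rw [Finset.sum_congr rfl fun i _ => this i, Finset.sum_comm]
    have hvl : ∀ k l, k ≠ l → ⟪v k, v l⟫_ℂ = 0 := by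
      intro k l hkl
      rw [hv, pair]
      refine Finset.sum_eq_zero fun i _ => Finset.sum_eq_zero fun j _ => ?_
      rw [(hGinner (xv i) (xv j)).1 k l hkl]
      ring
    have hTww : ⟪T w, T w⟫_ℂ = ∑ k, ⟪v k, v k⟫_ℂ := by
      rw [hTw, sum_inner]
      refine Finset.sum_congr rfl fun k _ => ?_
      rw [inner_sum]
      exact Finset.sum_eq_single_of_mem k (Finset.mem_univ k)
        (fun l _ hl => hvl k l (Ne.symm hl))
    have hsum : ∀ k, ⟪v k, v k⟫_ℂ + ⟪u k, u k⟫_ℂ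
        = ∑ i, ∑ j, (starRingEnd ℂ) (f i)
            * (f j * (⟪G k (xv i), G k (xv j)⟫_ℂ * ⟪yv i, yv j⟫_ℂ)) := by
      intro k
      rw [hv, hu, pair, pair, ← Finset.sum_add_distrib]
      refine Finset.sum_congr rfl fun i _ => ?_
      rw [← Finset.sum_add_distrib]
      refine Finset.sum_congr rfl fun j _ => ?_
      linear_combination ((starRingEnd ℂ) (f i) * f j * ⟪G k (xv i), G k (xv j)⟫_ℂ)
        * (hD k (yv i) (yv j))
    have htotal : ∑ k, (⟪v k, v k⟫_ℂ + ⟪u k, u k⟫_ℂ) = ⟪w, w⟫_ℂ := by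
      calc ∑ k, (⟪v k, v k⟫_ℂ + ⟪u k, u k⟫_ℂ)
          = ∑ k, ∑ i, ∑ j, (starRingEnd ℂ) (f i)
              * (f j * (⟪G k (xv i), G k (xv j)⟫_ℂ * ⟪yv i, yv j⟫_ℂ)) :=
            Finset.sum_congr rfl fun k _ => hsum k
        _ = ∑ i, ∑ j, (starRingEnd ℂ) (f i)
              * (f j * (⟪xv i, xv j⟫_ℂ * ⟪yv i, yv j⟫_ℂ)) := by
            rw [Finset.sum_comm]
            refine Finset.sum_congr rfl fun i _ => ?_
            rw [Finset.sum_comm]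
            refine Finset.sum_congr rfl fun j _ => ?_
            rw [← (hGinner (xv i) (xv j)).2, Finset.sum_mul, Finset.mul_sum, Finset.mul_sum]
        _ = ⟪w, w⟫_ℂ := by
              conv_rhs => rw [hw']
              exact (pair n f xv xv yv yv).symm
    have hkey : ⟪T w, T w⟫_ℂ + ∑ k, ⟪u k, u k⟫_ℂ = ⟪w, w⟫_ℂ := by
      rw [hTww, ← Finset.sum_add_distrib, htotal]
    have hre : ‖T w‖ ^ 2 + ∑ k, ‖u k‖ ^ 2 = ‖w‖ ^ 2 := by
      simp only [inner_self_eq_norm_sq_to_K] at hkey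
      exact_mod_cast hkey
    have hnn : (0:ℝ) ≤ ∑ k, ‖u k‖ ^ 2 := Finset.sum_nonneg fun k _ => sq_nonneg _
    nlinarith [norm_nonneg (T w), norm_nonneg w]
  -- Step 4: extend by density
  refine opNorm_le_bound T zero_le_one fun z => ?_
  rw [one_mul]
  have hcl : IsClosed {w : HK | ‖T w‖ ≤ ‖w‖} :=
    isClosed_le (T.continuous.norm) continuous_norm
  have hsub : (Submodule.span ℂ {z : HK | ∃ x y, ι x y = z} : Set HK)
      ⊆ {w : HK | ‖T w‖ ≤ ‖w‖} := fun w hw => hspan w hw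
  have hclo : closure (Submodule.span ℂ {z : HK | ∃ x y, ι x y = z} : Set HK)
      ⊆ {w : HK | ‖T w‖ ≤ ‖w‖} := hcl.closure_subset_iff.mpr hsub
  have hz : z ∈ closure (Submodule.span ℂ {z : HK | ∃ x y, ι x y = z} : Set HK) := by
    have hc := congrArg (fun s : Submodule ℂ HK => (s : Set HK)) hdense
    simp only [Submodule.topologicalClosure_coe, Submodule.top_coe] at hc
    rw [hc]
    trivial
  exact hclo hz
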